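/- Let σ ∈ Stmt^ω, X ∈ (2^{ρ∪υ})^ω and ζ a computation with ζ ◁ combine(σ, X). Then the reduced computation ζ|σ matches σ, i.e. ζ|σ ◁ σ. -/

import Mathlib

namespace TSLMC

open scoped Classical

/-! ### Theories, function terms, assignments -/

/-- A theory: interpretation of function symbols, plus distinguished values true/false. -/
structure Thy (V F : Type) where
  ε : F → List V → V
  vtrue : V
  vfalse : V

/-- Function terms over inputs `I`, cells `C` and function symbols `F`. -/
inductive FTerm (I C F : Type) : Type where
  | inp  : I → FTerm I C F
  | cell : C → FTerm I C F
  | app  : F → List (FTerm I C F) → FTerm I C F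

/-- An assignment gives values to inputs and cells. -/
abbrev Assign (V I C : Type) := I ⊕ C → V

variable {V I C F Pi : Type}

/-- Evaluation of a function term under an assignment. -/
def FTerm.eval (T : Thy V F) (a : Assign V I C) : FTerm I C F → V
  | .inp i => a (.inl i)
  | .cell c => a (.inr c)
  | .app f ts => T.ε f (ts.attach.map fun t => t.1.eval T a)
decreasing_by
  have := List.sizeOf_lt_of_mem t.2
  simp only [FTerm.app.sizeOf_spec]
  omega

/-- A predicate term is a function term evaluating only to true or false. -/
def IsPredTerm (T : Thy V F) (τ : FTerm I C F) : Prop :=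
  ∀ a : Assign V I C, τ.eval T a = T.vtrue ∨ τ.eval T a = T.vfalse

/-- The theory contains (at least) equality, negation, conjunction and a true constant,
with their usual interpretations, and true ≠ false. -/
structure Ops (V F : Type) (T : Thy V F) where
  feq : F
  fneg : F
  fand : F
  ftrue : F
  heq : ∀ x y : V, T.ε feq [x, y] = if x = y then T.vtrue else T.vfalse
  hneg : ∀ x : V, T.ε fneg [x] = if x = T.vtrue then T.vfalse else T.vtrue
  hand : ∀ x y : V, T.ε fand [x, y] = if x = T.vtrue ∧ y = T.vtrue then T.vtrue else T.vfalse
  htrue : T.ε ftrue [] = T.vtrue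
  tne : T.vtrue ≠ T.vfalse

/-! ### TSL(T) formulas -/

/-- TSL(T) formulas (atoms: predicate terms and update terms `⟦c ↞ τ⟧`). -/
inductive TSL (I C F : Type) : Type where
  | pred : FTerm I C F → TSL I C F
  | upd  : C → FTerm I C F → TSL I C F
  | not  : TSL I C F → TSL I C F
  | and  : TSL I C F → TSL I C F → TSL I C F
  | next : TSL I C F → TSL I C F
  | untl : TSL I C F → TSL I C F → TSL I C F

/-- `prevA init ζ t` is `ζ (t-1)`, with the fixed initial assignment at `t = 0`. -/
def prevA (init : Assign V I C) (ζ : ℕ → Assign V I C) : ℕ → Assign V I C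
  | 0 => init
  | t + 1 => ζ t

/-- Satisfaction of a TSL(T) formula over a computation at a time point. -/
def TSL.sat (T : Thy V F) (init : Assign V I C) (ζ : ℕ → Assign V I C) :
    TSL I C F → ℕ → Prop
  | .pred τ, t => τ.eval T (ζ t) = T.vtrue
  | .upd c τ, t => τ.eval T (prevA init ζ t) = ζ t (.inr c)
  | .not φ, t => ¬ φ.sat T init ζ t
  | .and φ ψ, t => φ.sat T init ζ t ∧ ψ.sat T init ζ t
  | .next φ, t => φ.sat T init ζ (t + 1)
  | .untl φ ψ, t => ∃ t', t ≤ t' ∧ ψ.sat T init ζ t' ∧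
      ∀ t'', t ≤ t'' → t'' < t' → φ.sat T init ζ t''

/-- The list of predicate terms appearing in a TSL(T) formula. -/
def TSL.predList : TSL I C F → List (FTerm I C F)
  | .pred τ => [τ]
  | .upd _ _ => []
  | .not φ => φ.predList
  | .and φ ψ => φ.predList ++ ψ.predList
  | .next φ => φ.predList
  | .untl φ ψ => φ.predList ++ ψ.predList

/-- The list of update terms appearing in a TSL(T) formula. -/
def TSL.updList : TSL I C F → List (C × FTerm I C F)
  | .pred _ => []
  | .upd c τ => [(c, τ)]
  | .not φ => φ.updList
  | .and φ ψ => φ.updList ++ ψ.updList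
  | .next φ => φ.updList
  | .untl φ ψ => φ.updList ++ ψ.updList

/-! ### LTL -/

/-- LTL formulas over atomic propositions `A`. -/
inductive LTL (A : Type) : Type where
  | atom : A → LTL A
  | not : LTL A → LTL A
  | and : LTL A → LTL A → LTL A
  | next : LTL A → LTL A
  | untl : LTL A → LTL A → LTL A

/-- Standard LTL satisfaction over words of sets of atomic propositions. -/
def LTL.sat (w : ℕ → Set A) : LTL A → ℕ → Prop
  | .atom a, t => a ∈ w t
  | .not φ, t => ¬ φ.sat w t
  | .and φ ψ, t => φ.sat w t ∧ ψ.sat w t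
  | .next φ, t => φ.sat w (t + 1)
  | .untl φ ψ, t => ∃ t', t ≤ t' ∧ ψ.sat w t' ∧ ∀ t'', t ≤ t'' → t'' < t' → φ.sat w t''

/-- Atomic propositions: predicate terms and update terms. -/
abbrev AP (I C F : Type) := FTerm I C F ⊕ (C × FTerm I C F)

/-- The LTL formula obtained from a TSL(T) formula by treating predicate and
update terms as atomic propositions. -/
def TSL.toLTL : TSL I C F → LTL (AP I C F)
  | .pred τ => .atom (.inl τ)
  | .upd c τ => .atom (.inr (c, τ))
  | .not φ => .not φ.toLTL
  | .and φ ψ => .and φ.toLTL ψ.toLTL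
  | .next φ => .next φ.toLTL
  | .untl φ ψ => .untl φ.toLTL ψ.toLTL

/-- `SeqW T init ζ ρ υ t` is the set of predicate terms of `ρ` and update terms of `υ`
that hold at time `t` of the computation `ζ`. -/
def SeqW (T : Thy V F) (init : Assign V I C) (ζ : ℕ → Assign V I C)
    (ρ : Set (FTerm I C F)) (υ : Set (C × FTerm I C F)) : ℕ → Set (AP I C F) :=
  fun t => {a | Sum.elim
    (fun τ => τ ∈ ρ ∧ TSL.sat T init ζ (.pred τ) t)
    (fun u => u ∈ υ ∧ TSL.sat T init ζ (.upd u.1 u.2) t) a}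

/-! ### Program statements, matching, feasibility -/

/-- Basic program statements. -/
inductive Stmt0 (I C F : Type) : Type where
  | assert : FTerm I C F → Stmt0 I C F
  | assign : C → FTerm I C F → Stmt0 I C F
  | havoc : C → Stmt0 I C F

/-- Program statements: nonempty finite sequences of basic statements. -/
abbrev Stmt (I C F : Type) := {l : List (Stmt0 I C F) // l ≠ []}

/-- A computation matches a trace of basic statements at time `t`. -/
def matchesAt (T : Thy V F) (init : Assign V I C) (ζ : ℕ → Assign V I C)
    (σ : ℕ → Stmt0 I C F) (t : ℕ) : Prop :=
  match σ t with
  | .assert τ => τ.eval T (prevA init ζ t) = T.vtrue ∧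
      ∀ c : C, ζ t (.inr c) = prevA init ζ t (.inr c)
  | .assign c τ => ζ t (.inr c) = τ.eval T (prevA init ζ t) ∧
      ∀ c', c' ≠ c → ζ t (.inr c') = prevA init ζ t (.inr c')
  | .havoc c => ∀ c', c' ≠ c → ζ t (.inr c') = prevA init ζ t (.inr c')

/-- A computation matches a trace of basic statements. -/
def Matches (T : Thy V F) (init : Assign V I C) (ζ : ℕ → Assign V I C)
    (σ : ℕ → Stmt0 I C F) : Prop :=
  ∀ t, matchesAt T init ζ σ t

/-- Position (index of the statement, offset inside it) of the `j`-th basic statement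
in the flattening of a trace of composed statements. -/
def fpos (σ : ℕ → Stmt I C F) : ℕ → ℕ × ℕ
  | 0 => (0, 0)
  | j + 1 =>
    let p := fpos σ j
    if p.2 + 1 < ((σ p.1).1).length then (p.1, p.2 + 1) else (p.1 + 1, 0)

/-- The flattening of a trace of composed statements into basic statements. -/
def flatten (σ : ℕ → Stmt I C F) (j : ℕ) : Stmt0 I C F :=
  ((σ (fpos σ j).1).1).getD (fpos σ j).2 (((σ (fpos σ j).1).1).head (σ (fpos σ j).1).2)

/-- A computation matches a trace of composed statements (via its flattening). -/
def MatchesC (T : Thy V F) (init : Assign V I C) (ζ : ℕ → Assign V I C)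
    (σ : ℕ → Stmt I C F) : Prop :=
  Matches T init ζ (flatten σ)

/-- A trace of composed statements is feasible if some computation matches it. -/
def Feasible (T : Thy V F) (init : Assign V I C) (σ : ℕ → Stmt I C F) : Prop :=
  ∃ ζ, MatchesC T init ζ σ

/-- A trace of basic statements is feasible if some computation matches it. -/
def Feasible0 (T : Thy V F) (init : Assign V I C) (σ : ℕ → Stmt0 I C F) : Prop :=
  ∃ ζ, Matches T init ζ σ

/-! ### Büchi automata -/

/-- A Büchi automaton. -/
structure Buchi (A : Type) (Q : Type) where
  q0 : Q
  δ : Q → A → Q → Prop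
  Acc : Set Q

/-- A run of a Büchi automaton on a word. -/
def Buchi.IsRun {A Q : Type} (B : Buchi A Q) (σ : ℕ → A) (r : ℕ → Q) : Prop :=
  r 0 = B.q0 ∧ ∀ t, B.δ (r t) (σ t) (r (t + 1))

/-- Büchi acceptance: some run visits accepting states infinitely often. -/
def Buchi.Accepts {A Q : Type} (B : Buchi A Q) (σ : ℕ → A) : Prop :=
  ∃ r, B.IsRun σ r ∧ ∀ n, ∃ m, n ≤ m ∧ r m ∈ B.Acc

/-- A program automaton over basic statements satisfies a TSL(T) formula if every
computation matching an accepted trace satisfies the formula. -/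
def SatisfiesTSL {Qp : Type} (T : Thy V F) (init : Assign V I C)
    (P : Buchi (Stmt0 I C F) Qp) (φ : TSL I C F) : Prop :=
  ∀ σ, P.Accepts σ → ∀ ζ, Matches T init ζ σ → φ.sat T init ζ 0

/-! ### The combine construction and the Büchi program product -/

/-- Extended cell set: original cells, inputs-as-cells, and fresh `tmp` cells. -/
abbrev CStar (I C : Type) := (C ⊕ I) ⊕ ℕ

/-- Embedding of terms over inputs/cells into terms over the extended cell set. -/
def FTerm.embed : FTerm I C F → FTerm Empty (CStar I C) F
  | .inp i => .cell (.inl (.inr i))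
  | .cell c => .cell (.inl (.inl c))
  | .app f ts => .app f (ts.attach.map fun t => t.1.embed)
decreasing_by
  have := List.sizeOf_lt_of_mem t.2
  simp only [FTerm.app.sizeOf_spec]
  omega

/-- Embedding of basic statements into statements over the extended cell set. -/
def Stmt0.embed : Stmt0 I C F → Stmt0 Empty (CStar I C) F
  | .assert τ => .assert τ.embed
  | .assign c τ => .assign (.inl (.inl c)) τ.embed
  | .havoc c => .havoc (.inl (.inl c))

/-- Conjunction of a list of terms (via the theory's conjunction symbol). -/
def conjTerm (T : Thy V F) (O : Ops V F T) :
    List (FTerm Empty (CStar I C) F) → FTerm Empty (CStar I C) F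
  | [] => .app O.ftrue []
  | τ :: ts => .app O.fand [τ, conjTerm T O ts]

/-- The `combine` construction: `save_values; s; new_inputs; check_preds_l; check_updates_l`. -/
noncomputable def combine (T : Thy V F) (O : Ops V F T) (ρ : List (FTerm I C F))
    (υ : List (C × FTerm I C F)) (inps : List I)
    (s : List (Stmt0 I C F)) (l : Set (AP I C F)) : Stmt Empty (CStar I C) F :=
  ⟨(υ.mapIdx fun j u => Stmt0.assign (Sum.inr j) u.2.embed)
    ++ s.map Stmt0.embed
    ++ (inps.map fun i => Stmt0.havoc (Sum.inl (Sum.inr i)))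
    ++ [Stmt0.assert (conjTerm T O
          (ρ.map fun τ => if Sum.inl τ ∈ l then τ.embed else .app O.fneg [τ.embed])),
        Stmt0.assert (conjTerm T O
          (υ.mapIdx fun j u =>
            let eqt : FTerm Empty (CStar I C) F :=
              .app O.feq [.cell (Sum.inl (Sum.inl u.1)), .cell (Sum.inr j)]
            if Sum.inr u ∈ l then eqt else .app O.fneg [eqt]))],
    by simp⟩

/-- Lifting an automaton over basic statements to an automaton over (composed) statements. -/
def liftB {Qp : Type} (P : Buchi (Stmt0 I C F) Qp) : Buchi (Stmt I C F) Qp where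
  q0 := P.q0
  δ := fun q w q' => ∃ s, P.δ q s q' ∧ w = ⟨[s], by simp⟩
  Acc := P.Acc

/-- The combined product `P ⊗ A` of a program automaton and a Büchi automaton over
sets of predicate/update terms. -/
noncomputable def product {Qp Qa : Type} (T : Thy V F) (O : Ops V F T)
    (P : Buchi (Stmt I C F) Qp) (A : Buchi (Set (AP I C F)) Qa)
    (ρ : List (FTerm I C F)) (υ : List (C × FTerm I C F)) (inps : List I) :
    Buchi (Stmt Empty (CStar I C) F) (Qp × Qa) where
  q0 := (P.q0, A.q0)
  δ := fun x w y => ∃ s l, P.δ x.1 s y.1 ∧ A.δ x.2 l y.2 ∧ w = combine T O ρ υ inps s.1 l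
  Acc := {x | x.2 ∈ A.Acc}

/-! ### HyperTSL(T) -/

/-- HyperTSL(T) formulas: a quantifier prefix over trace variables, followed by a
quantifier-free formula over trace-indexed inputs and cells. -/
inductive HyperTSL (I C F Pi : Type) : Type where
  | qf : TSL (I × Pi) (C × Pi) F → HyperTSL I C F Pi
  | all : Pi → HyperTSL I C F Pi → HyperTSL I C F Pi
  | ex : Pi → HyperTSL I C F Pi → HyperTSL I C F Pi

/-- Extension `ζ̂[π, ζ]` of a hyper-computation by a computation for trace variable `π`. -/
noncomputable def extendH (ζh : ℕ → Assign V (I × Pi) (C × Pi)) (π : Pi)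
    (ζ : ℕ → Assign V I C) : ℕ → Assign V (I × Pi) (C × Pi) :=
  fun t x =>
    match x with
    | .inl (i, π') => if π' = π then ζ t (.inl i) else ζh t (.inl (i, π'))
    | .inr (c, π') => if π' = π then ζ t (.inr c) else ζh t (.inr (c, π'))

/-- Satisfaction of a HyperTSL(T) formula. -/
noncomputable def HyperTSL.sat (T : Thy V F) (init : Assign V (I × Pi) (C × Pi))
    (Z : Set (ℕ → Assign V I C)) :
    HyperTSL I C F Pi → (ℕ → Assign V (I × Pi) (C × Pi)) → ℕ → Prop
  | .qf ψ, ζh, t => ψ.sat T init ζh t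
  | .all π φ, ζh, t => ∀ ζ ∈ Z, φ.sat T init Z (extendH ζh π ζ) t
  | .ex π φ, ζh, t => ∃ ζ ∈ Z, φ.sat T init Z (extendH ζh π ζ) t

/-- Lift an assignment to a hyper-assignment (every trace gets the same values). -/
def liftInit (init : Assign V I C) : Assign V (I × Pi) (C × Pi) :=
  fun x => match x with
  | .inl (i, _) => init (.inl i)
  | .inr (c, _) => init (.inr c)

/-- The set of computations matching accepted traces of a program automaton. -/
def Zof {Qp : Type} (T : Thy V F) (init : Assign V I C)
    (P : Buchi (Stmt0 I C F) Qp) : Set (ℕ → Assign V I C) :=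
  {ζ | ∃ σ, P.Accepts σ ∧ Matches T init ζ σ}

/-- A program automaton satisfies a HyperTSL(T) formula. -/
noncomputable def SatisfiesHyper {Qp : Type} (T : Thy V F) (init : Assign V I C)
    (P : Buchi (Stmt0 I C F) Qp) (φ : HyperTSL I C F Pi) : Prop :=
  φ.sat T (liftInit init) (Zof T init P) (fun _ => liftInit init) 0

/-- Renaming of terms: cell `c` becomes `c_π`, input `i` becomes `i_π`. -/
def FTerm.rename (π : Pi) : FTerm I C F → FTerm (I × Pi) (C × Pi) F
  | .inp i => .inp (i, π)
  | .cell c => .cell (c, π)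
  | .app f ts => .app f (ts.attach.map fun t => t.1.rename π)
decreasing_by
  have := List.sizeOf_lt_of_mem t.2
  simp only [FTerm.app.sizeOf_spec]
  omega

/-- Renaming of basic statements to a trace variable. -/
def Stmt0.rename (π : Pi) : Stmt0 I C F → Stmt0 (I × Pi) (C × Pi) F
  | .assert τ => .assert (τ.rename π)
  | .assign c τ => .assign (c, π) (τ.rename π)
  | .havoc c => .havoc (c, π)

/-- The `n`-fold self-composition of a program automaton. -/
def selfComp {Qp : Type} (P : Buchi (Stmt0 I C F) Qp) (n : ℕ) :
    Buchi (Stmt (I × Fin n) (C × Fin n) F) (Fin n → Qp) where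
  q0 := fun _ => P.q0
  δ := fun q w q' => ∃ ss : Fin n → Stmt0 I C F,
        (∀ j, P.δ (q j) (ss j) (q' j)) ∧
        w.1 = (List.finRange n).map fun j => (ss j).rename j
  Acc := Set.univ

/-- The `m`-fold self-composition, using the first `m` of `n` trace variables. -/
def selfCompInto {Qp : Type} (P : Buchi (Stmt0 I C F) Qp) (m n : ℕ) (h : m ≤ n) :
    Buchi (Stmt (I × Fin n) (C × Fin n) F) (Fin m → Qp) where
  q0 := fun _ => P.q0
  δ := fun q w q' => ∃ ss : Fin m → Stmt0 I C F,
        (∀ j, P.δ (q j) (ss j) (q' j)) ∧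
        w.1 = (List.finRange m).map fun j => (ss j).rename (Fin.castLE h j)
  Acc := Set.univ

end TSLMC

/-! ### k-feasibility and the automaton `P_k` -/

namespace TSLMC
open scoped Classical
variable {V I C F Pi : Type}

/-- The statement `assert(true)`. -/
def trueStmt (T : Thy V F) (O : Ops V F T) : Stmt I C F :=
  ⟨[.assert (.app O.ftrue [])], by simp⟩

/-- Extend a finite window of statements by `assert(true)^ω`. -/
def extendTrue (T : Thy V F) (O : Ops V F T) (ss : List (Stmt I C F)) : ℕ → Stmt I C F :=
  fun t => if h : t < ss.length then ss.get ⟨t, h⟩ else trueStmt T O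

/-- A finite window of statements is feasible if, followed by `assert(true)^ω`, it is
feasible for some initial assignment. -/
def WinFeasible (T : Thy V F) (O : Ops V F T) (ss : List (Stmt I C F)) : Prop :=
  ∃ init : Assign V I C, Feasible T init (extendTrue T O ss)

/-- The window `σ_j … σ_{j+k-1}` of a trace. -/
def window (σ : ℕ → α) (j k : ℕ) : List α :=
  (List.range k).map fun i => σ (j + i)

/-- A trace is `k`-feasible if no window of `k` consecutive statements is infeasible
for all initial assignments. -/
def KFeasible (T : Thy V F) (O : Ops V F T) (k : ℕ) (σ : ℕ → Stmt I C F) : Prop :=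
  ∀ j, WinFeasible T O (window σ j k)

/-- Chains of transitions of an automaton. -/
def chain {S Qp : Type} (P : Buchi S Qp) : Qp → List (S × Qp) → Prop
  | _, [] => True
  | q, (s, q') :: rest => P.δ q s q' ∧ chain P q' rest

/-- The last state of an alternating state/statement sequence. -/
def lastQ {S Qp : Type} (st : Qp × List (S × Qp)) : Qp :=
  (st.2.getLast?).elim st.1 Prod.snd

/-- The statements of an alternating state/statement sequence. -/
def stmts {S Qp : Type} (st : Qp × List (S × Qp)) : List S :=
  st.2.map Prod.fst

/-- Valid states of `P_k`: chains of transitions of `P` of length `k-1`, or shorter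
ones starting at the initial state. -/
def ValidSt {S Qp : Type} (P : Buchi S Qp) (k : ℕ) (st : Qp × List (S × Qp)) : Prop :=
  chain P st.1 st.2 ∧ (st.2.length = k - 1 ∨ (st.2.length < k - 1 ∧ st.1 = P.q0))

/-- Extend an alternating sequence by a transition, dropping the first entry if the
window is full. -/
def push {S Qp : Type} (k : ℕ) (st : Qp × List (S × Qp)) (s : S) (q' : Qp) :
    Qp × List (S × Qp) :=
  let l' := st.2 ++ [(s, q')]
  if k ≤ l'.length then
    match l' with
    | [] => (st.1, [])
    | e :: rest => (e.2, rest)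
  else (st.1, l')

/-- The automaton `P_k`: `P` without `k`-infeasibility. -/
def Pk {Qp : Type} (T : Thy V F) (O : Ops V F T) (P : Buchi (Stmt I C F) Qp) (k : ℕ) :
    Buchi (Stmt I C F) (Qp × List (Stmt I C F × Qp)) where
  q0 := (P.q0, [])
  δ := fun st s st' => ValidSt P k st ∧ ValidSt P k st' ∧
        ∃ q', P.δ (lastQ st) s q' ∧ WinFeasible T O (stmts st ++ [s]) ∧ st' = push k st s q'
  Acc := {st | lastQ st ∈ P.Acc}

/-! ### Infeasible accepting cycles and their removal -/

/-- The trace `(s₁ … s_n)^ω` of a cycle. -/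
def cycTrace (T : Thy V F) (O : Ops V F T) {Qp : Type}
    (ϱ : List (Qp × Stmt I C F × Qp)) : ℕ → Stmt I C F :=
  fun t => ((ϱ[t % ϱ.length]?).map fun e => e.2.1).getD (trueStmt T O)

/-- `ϱ` is a cycle of transitions of `B`. -/
def IsCycle {S Qp : Type} (B : Buchi S Qp) (ϱ : List (Qp × S × Qp)) : Prop :=
  ϱ ≠ [] ∧ (∀ e ∈ ϱ, B.δ e.1 e.2.1 e.2.2) ∧
  (∀ i, (h : i + 1 < ϱ.length) →
    (ϱ.get ⟨i + 1, h⟩).1 = (ϱ.get ⟨i, Nat.lt_of_succ_lt h⟩).2.2) ∧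
  ∀ h : ϱ ≠ [], (ϱ.getLast h).2.2 = (ϱ.head h).1

/-- An infeasible accepting cycle. -/
def InfAccCycle {Qp : Type} (T : Thy V F) (O : Ops V F T)
    (B : Buchi (Stmt I C F) Qp) (ϱ : List (Qp × Stmt I C F × Qp)) : Prop :=
  IsCycle B ϱ ∧ (∃ e ∈ ϱ, e.1 ∈ B.Acc) ∧
  ∀ init : Assign V I C, ¬ Feasible T init (cycTrace T O ϱ)

/-- A trace ends with the infinite repetition of the statements of the cycle `ϱ`. -/
def EndsWithCyc {Qp : Type} (T : Thy V F) (O : Ops V F T)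
    (σ : ℕ → Stmt I C F) (ϱ : List (Qp × Stmt I C F × Qp)) : Prop :=
  ∃ N, ∀ j, σ (N + j) = cycTrace T O ϱ j

/-- The automaton `A_ϱ`, accepting exactly the traces ending with `ϱ^ω`. -/
def cycAut {Qp : Type} (ϱ : List (Qp × Stmt I C F × Qp)) :
    Buchi (Stmt I C F) (Option (Fin ϱ.length)) where
  q0 := none
  δ := fun st s st' =>
    match st with
    | none => st' = none ∨ ∃ h : ϱ ≠ [],
        s = (ϱ.head h).2.1 ∧
        st' = some ⟨1 % ϱ.length, Nat.mod_lt _ (List.length_pos_iff.mpr h)⟩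
    | some i => s = (ϱ.get i).2.1 ∧
        st' = some ⟨((i : ℕ) + 1) % ϱ.length,
          Nat.mod_lt _ (Nat.lt_of_le_of_lt (Nat.zero_le _) i.isLt)⟩
  Acc := {st | st ≠ none}

/-- A Büchi automaton bundled with its state type. -/
structure BAut (A : Type) : Type 1 where
  Q : Type
  B : Buchi A Q

/-- One removal step: remove (the languages of the automata `A_ϱ` for) a set of
infeasible accepting cycles from an automaton. -/
def RemStep (T : Thy V F) (O : Ops V F T) (x y : BAut (Stmt I C F)) : Prop :=
  ∃ Cset : Set (List (x.Q × Stmt I C F × x.Q)),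
    (∀ ϱ ∈ Cset, InfAccCycle T O x.B ϱ) ∧
    ∀ σ, y.B.Accepts σ ↔ (x.B.Accepts σ ∧ ∀ ϱ ∈ Cset, ¬ EndsWithCyc T O σ ϱ)

/-- `k'` iterations of removing infeasible accepting cycles. -/
def RemChain (T : Thy V F) (O : Ops V F T) :
    ℕ → BAut (Stmt I C F) → BAut (Stmt I C F) → Prop
  | 0, x, y => y = x
  | k' + 1, x, y => ∃ z, RemChain T O k' x z ∧ RemStep T O z y

/-- The universal projection of (a refinement of) the combined product: keep the first
`m` of the `n` statements of each `combine`-labelled transition. -/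
noncomputable def projU {Q' : Type} (T : Thy V F) (O : Ops V F T) {m n : ℕ}
    (_hm : 0 < m) (hmn : m ≤ n)
    (ρ : List (FTerm (I × Fin n) (C × Fin n) F))
    (υ : List ((C × Fin n) × FTerm (I × Fin n) (C × Fin n) F))
    (inps : List (I × Fin n))
    (B : Buchi (Stmt Empty (CStar (I × Fin n) (C × Fin n)) F) Q') :
    Buchi (Stmt (I × Fin n) (C × Fin n) F) Q' where
  q0 := B.q0
  δ := fun q w q' => ∃ (ss : Fin n → Stmt0 (I × Fin n) (C × Fin n) F)
        (l : Set (AP (I × Fin n) (C × Fin n) F)),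
        B.δ q (combine T O ρ υ inps ((List.finRange n).map ss) l) q' ∧
        w.1 = (List.finRange m).map fun j => ss (Fin.castLE hmn j)
  Acc := B.Acc

/-- The formula `∀π₁ … ∀π_m ∃π_{m+1} … ∃π_n. ψ`. -/
def AEform (m n : ℕ) (ψ : TSL (I × Fin n) (C × Fin n) F) : HyperTSL I C F (Fin n) :=
  (List.finRange n).foldr
    (fun (j : Fin n) acc => if (j : ℕ) < m then HyperTSL.all j acc else HyperTSL.ex j acc)
    (.qf ψ)

end TSLMC
/-! ### Reduced and adapted computations -/

namespace TSLMC
open scoped Classical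
variable {V I C F Pi : Type}

/-- The index `ι(t) = B·(t+1) − 3` for blocks of length `B`. -/
def iotaIdx (B t : ℕ) : ℕ := B * (t + 1) - 3

/-- The reduced computation: the combined computation at the indices `ι(t)`,
restricted to the original inputs and cells. -/
def reduceC (B : ℕ) (ζ : ℕ → Assign V Empty (CStar I C)) : ℕ → Assign V I C :=
  fun t x => ζ (iotaIdx B t) (.inr (.inl x.swap))

/-- The reduced computation of trace variable `j`: the combined hyper-computation at
the indices `ι(t)`, restricted to the `j`-indexed inputs and cells, renamed back. -/
def reduceTr {n : ℕ} (B : ℕ) (j : Fin n)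
    (ζ : ℕ → Assign V Empty (CStar (I × Fin n) (C × Fin n))) : ℕ → Assign V I C :=
  fun t x => ζ (iotaIdx B t)
    (.inr (.inl (match x with | .inl i => .inr (i, j) | .inr c => .inl (c, j))))

/-- Assembling a hyper-computation from one computation per trace variable
(`∅[π₁, ζ₁]…[π_n, ζ_n]`). -/
def assembleH {n : ℕ} (red : Fin n → ℕ → Assign V I C) :
    ℕ → Assign V (I × Fin n) (C × Fin n) :=
  fun t x => match x with
  | .inl (i, j) => red j t (.inl i)
  | .inr (c, j) => red j t (.inr c)

/-- The adapted computation `ζ̃` of a computation `ζ`. -/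
noncomputable def adapt (T : Thy V F) (upds : List (C × FTerm I C F)) (inps : List I)
    (init : Assign V I C) (initC : Assign V Empty (CStar I C))
    (ζ : ℕ → Assign V I C) : ℕ → Assign V Empty (CStar I C) := fun idx x =>
  let m := upds.length
  let k := inps.length
  let b := idx / (m + k + 3)
  let i := idx % (m + k + 3)
  let newTmp : ℕ → V := fun p =>
    ((upds[p]?).map fun u => u.2.eval T (prevA init ζ b)).getD (initC (.inr (.inr p)))
  let oldTmp : ℕ → V := fun p =>
    match b with
    | 0 => initC (.inr (.inr p))
    | b' + 1 => ((upds[p]?).map fun u => u.2.eval T (prevA init ζ b')).getD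
        (initC (.inr (.inr p)))
  match x with
  | .inl e => e.elim
  | .inr (.inr p) => if i < m then (if p ≤ i then newTmp p else oldTmp p) else newTmp p
  | .inr (.inl (.inl c)) => if i < m then prevA init ζ b (.inr c) else ζ b (.inr c)
  | .inr (.inl (.inr ii)) =>
      if i < m + 1 then prevA init ζ b (.inl ii)
      else if i ≤ m + k then
        (if inps.idxOf ii < i - m then ζ b (.inl ii) else prevA init ζ b (.inl ii))
      else ζ b (.inl ii)

/-- The adapted hyper-computation of computations `ζ_{π₁}, …, ζ_{π_n}`. -/
noncomputable def hadapt {n : ℕ} (T : Thy V F)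
    (upds : List ((C × Fin n) × FTerm (I × Fin n) (C × Fin n) F))
    (inps : List (I × Fin n)) (init : Assign V I C)
    (initC : Assign V Empty (CStar (I × Fin n) (C × Fin n)))
    (ζs : Fin n → ℕ → Assign V I C) :
    ℕ → Assign V Empty (CStar (I × Fin n) (C × Fin n)) := fun idx x =>
  let m := upds.length
  let k := inps.length
  let b := idx / (m + n + k + 2)
  let i := idx % (m + n + k + 2)
  let ζ' : ℕ → Assign V (I × Fin n) (C × Fin n) := assembleH ζs
  let hinit : Assign V (I × Fin n) (C × Fin n) := liftInit init
  let newTmp : ℕ → V := fun p =>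
    ((upds[p]?).map fun u => u.2.eval T (prevA hinit ζ' b)).getD (initC (.inr (.inr p)))
  let oldTmp : ℕ → V := fun p =>
    match b with
    | 0 => initC (.inr (.inr p))
    | b' + 1 => ((upds[p]?).map fun u => u.2.eval T (prevA hinit ζ' b')).getD
        (initC (.inr (.inr p)))
  match x with
  | .inl e => e.elim
  | .inr (.inr p) => if i < m then (if p ≤ i then newTmp p else oldTmp p) else newTmp p
  | .inr (.inl (.inl cj)) =>
      if i < m then prevA hinit ζ' b (.inr cj)
      else if i < m + n then
        (if (cj.2 : ℕ) < i - m + 1 then ζs cj.2 b (.inr cj.1)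
         else prevA hinit ζ' b (.inr cj))
      else ζ' b (.inr cj)
  | .inr (.inl (.inr ij)) =>
      if i < m + n then prevA hinit ζ' b (.inl ij)
      else if i < m + n + k then
        (if inps.idxOf ij < i - (m + n) + 1 then ζ' b (.inl ij)
         else prevA hinit ζ' b (.inl ij))
      else ζ' b (.inl ij)

/-- The composed trace `σ_t = ((σ_{π₁})_{π₁})_t; … ; ((σ_{π_n})_{π_n})_t`. -/
def composedTrace {n : ℕ} (σs : Fin n → ℕ → Stmt0 I C F) (t : ℕ) :
    List (Stmt0 (I × Fin n) (C × Fin n) F) :=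
  (List.finRange n).map fun j => (σs j t).rename j

/-- The composed trace, as a trace of (nonempty) program statements. -/
def composedStmt {n : ℕ} (hn : 0 < n) (σs : Fin n → ℕ → Stmt0 I C F) (t : ℕ) :
    Stmt (I × Fin n) (C × Fin n) F :=
  ⟨composedTrace σs t, by
    intro h
    have := congrArg List.length h
    simp [composedTrace] at this
    omega⟩

end TSLMC

namespace TSLMC
open scoped Classical
variable {V I C F : Type}

theorem FTerm.ind' {P : FTerm I C F → Prop}
    (hi : ∀ i, P (.inp i)) (hc : ∀ c, P (.cell c))
    (ha : ∀ f ts, (∀ t ∈ ts, P t) → P (.app f ts)) : ∀ τ, P τ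
  | .inp i => hi i
  | .cell c => hc c
  | .app f ts => ha f ts fun t ht => FTerm.ind' hi hc ha t
decreasing_by have := List.sizeOf_lt_of_mem ht; simp only [FTerm.app.sizeOf_spec]; omega

theorem FTerm.eval_app (T : Thy V F) (a : Assign V I C) (f : F) (ts : List (FTerm I C F)) :
    (FTerm.app f ts).eval T a = T.ε f (ts.map fun t => t.eval T a) := by
  rw [FTerm.eval]
  congr 1
  simp

theorem FTerm.embed_app (f : F) (ts : List (FTerm I C F)) :
    (FTerm.app f ts).embed = FTerm.app f (ts.map FTerm.embed) := by
  rw [FTerm.embed]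
  congr 1
  simp

theorem FTerm.embed_eval (T : Thy V F) (a : Assign V Empty (CStar I C)) (τ : FTerm I C F) :
    τ.embed.eval T a = τ.eval T (fun y => a (.inr (.inl y.swap))) := by
  induction τ using FTerm.ind' with
  | hi i => simp [FTerm.embed, FTerm.eval, Sum.swap]
  | hc c => simp [FTerm.embed, FTerm.eval, Sum.swap]
  | ha f ts ih =>
      rw [FTerm.embed_app, FTerm.eval_app, FTerm.eval_app, List.map_map]
      exact congrArg _ (List.map_congr_left fun t ht => ih t ht)

variable {V I C F : Type}

theorem fpos_const (σ : ℕ → Stmt I C F) (B : ℕ) (hB : 0 < B)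
    (hlen : ∀ t, (σ t).1.length = B) : ∀ j, fpos σ j = (j / B, j % B) := by
  intro j
  induction j with
  | zero => simp [fpos, Nat.div_eq_of_lt hB, Nat.mod_eq_of_lt hB]
  | succ j ih =>
      have hmod : j % B < B := Nat.mod_lt _ hB
      have hdm : B * (j / B) + j % B = j := Nat.div_add_mod j B
      rw [fpos, ih, hlen]
      by_cases hc : j % B + 1 < B
      · have h1 : (j + 1) / B = j / B := by
          have : j + 1 = (j % B + 1) + B * (j / B) := by omega
          rw [this, Nat.add_mul_div_left _ _ hB, Nat.div_eq_of_lt hc]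
          omega
        have h2 : (j + 1) % B = j % B + 1 := by
          have : j + 1 = (j % B + 1) + B * (j / B) := by omega
          rw [this, Nat.add_mul_mod_self_left, Nat.mod_eq_of_lt hc]
        simp [hc, h1, h2]
      · have he : j % B + 1 = B := by omega
        have hmul : B * (j / B + 1) = B * (j / B) + B := by ring
        have h1 : (j + 1) / B = j / B + 1 := by
          have : j + 1 = B * (j / B + 1) := by omega
          rw [this, Nat.mul_div_cancel_left _ hB]
        have h2 : (j + 1) % B = 0 := by
          have : j + 1 = B * (j / B + 1) := by omega
          rw [this, Nat.mul_mod_right]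
        simp [hc, h1, h2]

theorem flatten_get (σ : ℕ → Stmt I C F) (B : ℕ) (hB : 0 < B)
    (hlen : ∀ t, (σ t).1.length = B) (j : ℕ) :
    flatten σ j = ((σ (j / B)).1)[j % B]'(by rw [hlen]; exact Nat.mod_lt _ hB) := by
  unfold flatten
  simp only [fpos_const σ B hB hlen]
  exact List.getD_eq_getElem _ _ (by rw [hlen]; exact Nat.mod_lt _ hB)

theorem matchesAt_assert {T : Thy V F} {init : Assign V I C} {ζ : ℕ → Assign V I C}
    {σ : ℕ → Stmt0 I C F} {t : ℕ} {τ : FTerm I C F} (hs : σ t = .assert τ) :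
    matchesAt T init ζ σ t ↔ (τ.eval T (prevA init ζ t) = T.vtrue ∧
      ∀ c : C, ζ t (.inr c) = prevA init ζ t (.inr c)) := by
  unfold matchesAt; rw [hs]

theorem matchesAt_assign {T : Thy V F} {init : Assign V I C} {ζ : ℕ → Assign V I C}
    {σ : ℕ → Stmt0 I C F} {t : ℕ} {c : C} {τ : FTerm I C F} (hs : σ t = .assign c τ) :
    matchesAt T init ζ σ t ↔ (ζ t (.inr c) = τ.eval T (prevA init ζ t) ∧
      ∀ c', c' ≠ c → ζ t (.inr c') = prevA init ζ t (.inr c')) := by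
  unfold matchesAt; rw [hs]

theorem matchesAt_havoc {T : Thy V F} {init : Assign V I C} {ζ : ℕ → Assign V I C}
    {σ : ℕ → Stmt0 I C F} {t : ℕ} {c : C} (hs : σ t = .havoc c) :
    matchesAt T init ζ σ t ↔ (∀ c', c' ≠ c → ζ t (.inr c') = prevA init ζ t (.inr c')) := by
  unfold matchesAt; rw [hs]

variable {V I C F : Type}

theorem combine_length (T : Thy V F) (O : Ops V F T) (ρ : List (FTerm I C F))
    (υ : List (C × FTerm I C F)) (inps : List I) (s0 : Stmt0 I C F) (l : Set (AP I C F)) :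
    (combine T O ρ υ inps [s0] l).1.length = υ.length + inps.length + 3 := by
  simp [combine]
  omega

theorem combine_get_tmp (T : Thy V F) (O : Ops V F T) (ρ : List (FTerm I C F))
    (υ : List (C × FTerm I C F)) (inps : List I) (s0 : Stmt0 I C F) (l : Set (AP I C F))
    (r : ℕ) (hr : r < υ.length) :
    (combine T O ρ υ inps [s0] l).1[r]'(by rw [combine_length]; omega)
      = .assign (.inr r) ((υ[r]'hr).2.embed) := by
  unfold combine
  rw [List.getElem_append_left, List.getElem_append_left, List.getElem_append_left]
  · rw [List.getElem_mapIdx]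
  all_goals simp [List.length_mapIdx]; omega


theorem combine_get_stmt (T : Thy V F) (O : Ops V F T) (ρ : List (FTerm I C F))
    (υ : List (C × FTerm I C F)) (inps : List I) (s0 : Stmt0 I C F) (l : Set (AP I C F)) :
    (combine T O ρ υ inps [s0] l).1[υ.length]'(by rw [combine_length]; omega)
      = s0.embed := by
  unfold combine
  rw [List.getElem_append_left, List.getElem_append_left, List.getElem_append_right]
  · simp [List.length_mapIdx]
  all_goals simp [List.length_mapIdx]

theorem combine_get_havoc (T : Thy V F) (O : Ops V F T) (ρ : List (FTerm I C F))
    (υ : List (C × FTerm I C F)) (inps : List I) (s0 : Stmt0 I C F) (l : Set (AP I C F))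
    (r : ℕ) (h1 : υ.length < r) (h2 : r ≤ υ.length + inps.length) :
    (combine T O ρ υ inps [s0] l).1[r]'(by rw [combine_length]; omega)
      = .havoc (.inl (.inr (inps[r - (υ.length + 1)]'(by omega)))) := by
  unfold combine
  rw [List.getElem_append_left, List.getElem_append_right]
  · rw [List.getElem_map]
    simp [List.length_mapIdx]
  all_goals simp [List.length_mapIdx]; omega

theorem combine_get_assert (T : Thy V F) (O : Ops V F T) (ρ : List (FTerm I C F))
    (υ : List (C × FTerm I C F)) (inps : List I) (s0 : Stmt0 I C F) (l : Set (AP I C F))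
    (r : ℕ) (h1 : υ.length + inps.length + 1 ≤ r) (h2 : r < υ.length + inps.length + 3) :
    ∃ τ', (combine T O ρ υ inps [s0] l).1[r]'(by rw [combine_length]; omega)
      = .assert τ' := by
  unfold combine
  rw [List.getElem_append_right]
  · simp only [List.length_append, List.length_map, List.length_mapIdx,
      List.length_cons, List.length_nil]
    have hd : r - (υ.length + 1 + inps.length) = 0 ∨
        r - (υ.length + 1 + inps.length) = 1 := by omega
    rcases hd with he | he <;> simp only [he] <;> exact ⟨_, rfl⟩
  · simp [List.length_mapIdx]; omega


theorem prevA_succ {V I C : Type} (init : Assign V I C) (ζ : ℕ → Assign V I C) (n : ℕ) :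
    prevA init ζ (n + 1) = ζ n := rfl

set_option maxHeartbeats 1000000 in
theorem reduced_matches
    {V I C F : Type} (T : Thy V F) (O : Ops V F T)
    (init : Assign V I C) (initC : Assign V Empty (CStar I C))
    (hic : ∀ c : C, initC (.inr (.inl (.inl c))) = init (.inr c))
    (hii : ∀ i : I, initC (.inr (.inl (.inr i))) = init (.inl i))
    (ρ : List (FTerm I C F)) (υ : List (C × FTerm I C F))
    (inps : List I) (hinps : ∀ i : I, i ∈ inps) (hnd : inps.Nodup)
    (σ : ℕ → Stmt0 I C F) (X : ℕ → Set (AP I C F))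
    (ζ : ℕ → Assign V Empty (CStar I C))
    (h : MatchesC T initC ζ (fun t => combine T O ρ υ inps [σ t] (X t))) :
    Matches T init (reduceC (inps.length + υ.length + 3) ζ) σ := by
  set B := inps.length + υ.length + 3 with hBdef
  set m := υ.length with hmdef
  set k := inps.length with hkdef
  have hB : 0 < B := by omega
  have hmB : m < B := by omega
  have hlen : ∀ t, ((fun t => combine T O ρ υ inps [σ t] (X t)) t).1.length = B := by
    intro t; rw [combine_length]; omega
  have h' : ∀ j, matchesAt T initC ζ
      (flatten fun t => combine T O ρ υ inps [σ t] (X t)) j := h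
  have hmod : ∀ q r : ℕ, r < B → (B * q + r) % B = r := by
    intro q r hr; rw [Nat.mul_add_mod, Nat.mod_eq_of_lt hr]
  have hflatAt : ∀ (q r : ℕ) (hr : r < B),
      flatten (fun t => combine T O ρ υ inps [σ t] (X t)) (B * q + r)
        = (combine T O ρ υ inps [σ q] (X q)).1[r]'(by rw [combine_length]; omega) := by
    intro q r hr
    rw [flatten_get _ B hB hlen]
    have h1 : (B * q + r) / B = q := by
      rw [Nat.mul_add_div hB, Nat.div_eq_of_lt hr]
      omega
    have h2 : (B * q + r) % B = r := hmod q r hr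
    simp only [h1, h2]
  -- step lemma for cells
  have hstepC : ∀ (j : ℕ) (c : C), j % B ≠ m →
      ζ j (.inr (.inl (.inl c))) = prevA initC ζ j (.inr (.inl (.inl c))) := by
    intro j c hy
    obtain ⟨q, r, hr, rfl⟩ : ∃ q r, r < B ∧ j = B * q + r :=
      ⟨j / B, j % B, Nat.mod_lt _ hB, (Nat.div_add_mod j B).symm⟩
    rw [hmod q r hr] at hy
    have hm' := h' (B * q + r)
    rcases Nat.lt_or_ge r m with h1 | h1
    · -- tmp assign
      rw [matchesAt_assign ((hflatAt q r hr).trans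
        (combine_get_tmp T O ρ υ inps (σ q) (X q) r h1))] at hm'
      exact hm'.2 _ (by simp)
    rcases Nat.lt_or_ge r (m + 1) with h2 | h2
    · -- the σ statement: r = m, excluded
      omega
    rcases Nat.lt_or_ge r (m + k + 1) with h3 | h3
    · -- havoc
      rw [matchesAt_havoc ((hflatAt q r hr).trans
        (combine_get_havoc T O ρ υ inps (σ q) (X q) r (by omega) (by omega)))] at hm'
      exact hm' _ (by simp)
    · -- asserts
      obtain ⟨τ', hτ'⟩ := combine_get_assert T O ρ υ inps (σ q) (X q) r (by omega) (by omega)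
      rw [matchesAt_assert ((hflatAt q r hr).trans hτ')] at hm'
      exact hm'.2 _
  -- step lemma for inputs
  have hstepI : ∀ (j : ℕ) (i : I), (j % B ≤ m ∨ m + k < j % B) →
      ζ j (.inr (.inl (.inr i))) = prevA initC ζ j (.inr (.inl (.inr i))) := by
    intro j i hy
    obtain ⟨q, r, hr, rfl⟩ : ∃ q r, r < B ∧ j = B * q + r :=
      ⟨j / B, j % B, Nat.mod_lt _ hB, (Nat.div_add_mod j B).symm⟩
    rw [hmod q r hr] at hy
    have hm' := h' (B * q + r)
    rcases Nat.lt_or_ge r m with h1 | h1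
    · rw [matchesAt_assign ((hflatAt q r hr).trans
        (combine_get_tmp T O ρ υ inps (σ q) (X q) r h1))] at hm'
      exact hm'.2 _ (by simp)
    rcases Nat.lt_or_ge r (m + 1) with h2 | h2
    · -- r = m : the embedded σ statement
      have hrm : r = m := by omega
      subst hrm
      have hstmt := (hflatAt q m hr).trans (combine_get_stmt T O ρ υ inps (σ q) (X q))
      rcases hσq : σ q with τ | ⟨c0, τ⟩ | c0
      · rw [hσq] at hstmt
        rw [matchesAt_assert hstmt] at hm'
        exact hm'.2 _
      · rw [hσq] at hstmt
        rw [matchesAt_assign hstmt] at hm'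
        exact hm'.2 _ (by simp)
      · rw [hσq] at hstmt
        rw [matchesAt_havoc hstmt] at hm'
        exact hm' _ (by simp)
    rcases Nat.lt_or_ge r (m + k + 1) with h3 | h3
    · omega
    · obtain ⟨τ', hτ'⟩ := combine_get_assert T O ρ υ inps (σ q) (X q) r (by omega) (by omega)
      rw [matchesAt_assert ((hflatAt q r hr).trans hτ')] at hm'
      exact hm'.2 _
  -- chain lemmas
  have hchainC : ∀ (c : C) (a b : ℕ), a ≤ b → (∀ j, a < j → j ≤ b → j % B ≠ m) →
      ζ b (.inr (.inl (.inl c))) = ζ a (.inr (.inl (.inl c))) := by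
    intro c a b hab
    induction b, hab using Nat.le_induction with
    | base => intro _; rfl
    | succ b hab ih =>
        intro hsafe
        rw [hstepC (b+1) c (hsafe _ (by omega) (by omega)), prevA_succ]
        exact ih fun j hj1 hj2 => hsafe j hj1 (by omega)
  have hchainI : ∀ (i : I) (a b : ℕ), a ≤ b →
      (∀ j, a < j → j ≤ b → (j % B ≤ m ∨ m + k < j % B)) →
      ζ b (.inr (.inl (.inr i))) = ζ a (.inr (.inl (.inr i))) := by
    intro i a b hab
    induction b, hab using Nat.le_induction with
    | base => intro _; rfl
    | succ b hab ih =>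
        intro hsafe
        rw [hstepI (b+1) i (hsafe _ (by omega) (by omega)), prevA_succ]
        exact ih fun j hj1 hj2 => hsafe j hj1 (by omega)
  have hinitC' : ∀ (c : C) (b : ℕ), (∀ j, j < b → j % B ≠ m) →
      prevA initC ζ b (.inr (.inl (.inl c))) = initC (.inr (.inl (.inl c))) := by
    intro c b
    induction b with
    | zero => intro _; rfl
    | succ b ih =>
        intro hsafe
        rw [prevA_succ, hstepC b c (hsafe _ (by omega))]
        exact ih fun j hj => hsafe j (by omega)
  have hinitI' : ∀ (i : I) (b : ℕ), (∀ j, j < b → (j % B ≤ m ∨ m + k < j % B)) →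
      prevA initC ζ b (.inr (.inl (.inr i))) = initC (.inr (.inl (.inr i))) := by
    intro i b
    induction b with
    | zero => intro _; rfl
    | succ b ih =>
        intro hsafe
        rw [prevA_succ, hstepI b i (hsafe _ (by omega))]
        exact ih fun j hj => hsafe j (by omega)
  intro t
  have hiota : iotaIdx B t = B * t + (m + k) := by
    have hBt : B * (t + 1) = B * t + B := by ring
    unfold iotaIdx; omega
  -- the previous assignment agreement
  have hprev : ∀ y : I ⊕ C,
      prevA initC ζ (B * t + m) (.inr (.inl y.swap))
        = prevA init (reduceC B ζ) t y := by
    intro y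
    cases t with
    | zero =>
        have hsafe1 : ∀ j, j < B * 0 + m → j % B ≠ m := by
          intro j hj
          rw [Nat.mod_eq_of_lt (by omega)]; omega
        have hsafe2 : ∀ j, j < B * 0 + m → (j % B ≤ m ∨ m + k < j % B) := by
          intro j hj
          rw [Nat.mod_eq_of_lt (by omega)]; omega
        cases y with
        | inl i => exact (hinitI' i _ hsafe2).trans (hii i)
        | inr c => exact (hinitC' c _ hsafe1).trans (hic c)
    | succ t' =>
        have hpos : B * (t' + 1) + m = (B * (t' + 1) + m - 1) + 1 := by
          have : B * (t' + 1) = B * t' + B := by ring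
          omega
        rw [hpos, prevA_succ]
        have hmul : B * (t' + 1) = B * t' + B := by ring
        have hablev : iotaIdx B t' ≤ B * (t' + 1) + m - 1 := by
          have h2 : B * (t' + 1) = B * t' + B := by ring
          have := hiota -- not for t'
          have h3 : iotaIdx B t' = B * t' + (m + k) := by
            have hBt : B * (t' + 1) = B * t' + B := by ring
            unfold iotaIdx; omega
          omega
        have hsafeC : ∀ j, iotaIdx B t' < j → j ≤ B * (t' + 1) + m - 1 → j % B ≠ m := by
          intro j hj1 hj2
          have h3 : iotaIdx B t' = B * t' + (m + k) := by
            have hBt : B * (t' + 1) = B * t' + B := by ring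
            unfold iotaIdx; omega
          rcases Nat.lt_or_ge j (B * (t' + 1)) with hc | hc
          · have hj : j = B * t' + (j - B * t') := by omega
            rw [hj, hmod _ _ (by omega)]
            omega
          · have hj : j = B * (t' + 1) + (j - B * (t' + 1)) := by omega
            rw [hj, hmod _ _ (by omega)]
            omega
        have hsafeI : ∀ j, iotaIdx B t' < j → j ≤ B * (t' + 1) + m - 1 →
            (j % B ≤ m ∨ m + k < j % B) := by
          intro j hj1 hj2
          have h3 : iotaIdx B t' = B * t' + (m + k) := by
            have hBt : B * (t' + 1) = B * t' + B := by ring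
            unfold iotaIdx; omega
          rcases Nat.lt_or_ge j (B * (t' + 1)) with hc | hc
          · have hj : j = B * t' + (j - B * t') := by omega
            rw [hj, hmod _ _ (by omega)]
            omega
          · have hj : j = B * (t' + 1) + (j - B * (t' + 1)) := by omega
            rw [hj, hmod _ _ (by omega)]
            omega
        cases y with
        | inl i => exact hchainI i _ _ hablev hsafeI
        | inr c => exact hchainC c _ _ hablev hsafeC
  -- value of cells at the reduction point
  have hpost : ∀ c : C, ζ (iotaIdx B t) (.inr (.inl (.inl c)))
      = ζ (B * t + m) (.inr (.inl (.inl c))) := by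
    intro c
    rw [hiota]
    have hab : B * t + m ≤ B * t + (m + k) := by omega
    refine hchainC c _ _ hab ?_
    intro j hj1 hj2
    have hj : j = B * t + (j - B * t) := by omega
    rw [hj, hmod _ _ (by omega)]
    omega
  have hredc : ∀ c : C, reduceC B ζ t (.inr c) = ζ (iotaIdx B t) (.inr (.inl (.inl c))) :=
    fun c => rfl
  -- the matched statement at position B*t + m
  have hm0 := h' (B * t + m)
  have hstmt := (hflatAt t m hmB).trans (combine_get_stmt T O ρ υ inps (σ t) (X t))
  have hprevf : (fun y => prevA initC ζ (B * t + m) (.inr (.inl (Sum.swap y))))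
      = prevA init (reduceC B ζ) t := funext hprev
  rcases hσt : σ t with τ | ⟨c0, τ⟩ | c0
  · rw [hσt] at hstmt
    rw [matchesAt_assert hstmt] at hm0
    rw [matchesAt_assert hσt]
    constructor
    · rw [← hprevf, ← FTerm.embed_eval]
      exact hm0.1
    · intro c
      rw [hredc c, hpost c, hm0.2 (.inl (.inl c))]
      exact hprev (.inr c)
  · rw [hσt] at hstmt
    rw [matchesAt_assign hstmt] at hm0
    rw [matchesAt_assign hσt]
    constructor
    · rw [hredc c0, hpost c0, hm0.1, FTerm.embed_eval, hprevf]
    · intro c' hc'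
      rw [hredc c', hpost c', hm0.2 (.inl (.inl c')) (by simp [hc'])]
      exact hprev (.inr c')
  · rw [hσt] at hstmt
    rw [matchesAt_havoc hstmt] at hm0
    rw [matchesAt_havoc hσt]
    intro c' hc'
    rw [hredc c', hpost c', hm0 (.inl (.inl c')) (by simp [hc'])]
    exact hprev (.inr c')

end TSLMC
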